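/- Let m ≥ 3. Fix j_0 ∈ {1,…,m}, let Δ¹ := {(e_1,…,e_m) : 0 ≤ e_{j_0} ≤ i_{j_0}, and 0 ≤ e_j ≤ n_j−1 for j ≠ j_0}, and let Δ := Δ¹ \ {(n_1−1,…,n_{j_0−1}−1, e_{j_0}, n_{j_0+1}−1,…,n_m−1) : s ≤ e_{j_0} ≤ i_{j_0}}, where either max{1, 2i_{j_0}−n_{j_0}+1} ≤ s ≤ i_{j_0} ≤ n_{j_0}−2 or i_{j_0} = s = 0. Then the monomial-Cartesian code C_Δ^P is an optimal (r,δ)-LRC with (r,δ) = (i_{j_0}+1, n_{j_0}−i_{j_0}), dimension k = (i_{j_0}+1)∏_{j≠j_0} n_j − (i_{j_0}−s+1), and minimum distance d = n_{j_0}−s+1 if s ≥ 1 and d = 2n_{j_0} if s = 0. -/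

import Mathlib

/-- The set of evaluation points `P = P₁ × ⋯ × P_m`. -/
abbrev MCCPt {F : Type*} {m : ℕ} (P : Fin m → Finset F) : Type _ :=
  (j : Fin m) → {x // x ∈ P j}

/-- The evaluation vector of the monomial `X^e` at the points of `P`. -/
def evMon {F : Type*} [Field F] {m : ℕ} (P : Fin m → Finset F) (e : Fin m → ℕ) :
    MCCPt P → F :=
  fun x => ∏ j, (x j : F) ^ e j

/-- The monomial-Cartesian code `C_Δ^P = ev_P(V_Δ)`. -/
def MCC {F : Type*} [Field F] {m : ℕ} (P : Fin m → Finset F) (Δ : Finset (Fin m → ℕ)) :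
    Submodule F (MCCPt P → F) :=
  Submodule.span F (evMon P '' ↑Δ)

/-- The code `C ⊆ F^ι` has minimum Hamming distance exactly `d`. -/
def HasMinDist {F ι : Type*} [Field F] [DecidableEq F] [Fintype ι]
    (C : Submodule F (ι → F)) (d : ℕ) : Prop :=
  (∀ c ∈ C, c ≠ 0 → d ≤ hammingNorm c) ∧ ∃ c ∈ C, c ≠ 0 ∧ hammingNorm c = d

/-- The code `C ⊆ F^ι` is an `(r, δ)`-locally recoverable code. -/
def IsLRC {F ι : Type*} [Field F] [DecidableEq F] [DecidableEq ι] [Fintype ι]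
    (C : Submodule F (ι → F)) (r δ : ℕ) : Prop :=
  ∀ i : ι, ∃ R : Finset ι, i ∈ R ∧ R.card ≤ r + δ - 1 ∧
    ∀ c ∈ C, (∃ j ∈ R, c j ≠ 0) → δ ≤ (R.filter fun j => c j ≠ 0).card

/-- `C` is an optimal `(r, δ)`-LRC with dimension `k` and minimum distance `d`:
it is an `(r, δ)`-LRC attaining the Singleton-like bound
`k + d + (⌈k/r⌉ - 1)(δ - 1) = n + 1`. -/
def IsOptimalLRC {F ι : Type*} [Field F] [DecidableEq F] [DecidableEq ι] [Fintype ι]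
    (C : Submodule F (ι → F)) (k d r δ : ℕ) : Prop :=
  IsLRC C r δ ∧ Module.finrank F C = k ∧ HasMinDist C d ∧
    k + d + ((k + r - 1) / r - 1) * (δ - 1) = Fintype.card ι + 1

/-- The box `Δ¹ = {(e₁,…,e_m) : 0 ≤ e_j ≤ i_j for all j}`. -/
def boxΔ {m : ℕ} (i : Fin m → ℕ) : Finset (Fin m → ℕ) :=
  Fintype.piFinset fun j => Finset.range (i j + 1)


open Finset Polynomial

section OneVar
variable {F : Type*} [Field F] [DecidableEq F]

/-- vanishing polynomial at all points of `s` except `y` -/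
noncomputable def dPoly (s : Finset F) (y : F) : F[X] := ∏ b ∈ s.erase y, (X - C b)

lemma dPoly_monic (s : Finset F) (y : F) : (dPoly s y).Monic :=
  monic_prod_of_monic _ _ fun b _ => monic_X_sub_C b

lemma dPoly_natDegree (s : Finset F) {y : F} (hy : y ∈ s) :
    (dPoly s y).natDegree = s.card - 1 := by
  rw [dPoly, natDegree_prod _ _ (fun b _ => X_sub_C_ne_zero b)]
  simp [card_erase_of_mem hy]

lemma dPoly_coeff_top (s : Finset F) {y : F} (hy : y ∈ s) :
    (dPoly s y).coeff (s.card - 1) = 1 := by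
  have := (dPoly_monic s y).coeff_natDegree
  rwa [dPoly_natDegree s hy] at this

lemma dPoly_eval_self (s : Finset F) {y : F} : (dPoly s y).eval y ≠ 0 := by
  rw [dPoly, eval_prod]
  refine prod_ne_zero_iff.2 fun b hb => ?_
  have : b ≠ y := ne_of_mem_erase hb
  simp [sub_ne_zero]
  exact fun h => this h.symm

lemma dPoly_eval_ne (s : Finset F) {y b : F} (hb : b ∈ s) (hby : b ≠ y) :
    (dPoly s y).eval b = 0 := by
  rw [dPoly, eval_prod]
  exact prod_eq_zero (mem_erase.2 ⟨hby, hb⟩) (by simp)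

end OneVar

section Interp
variable {F : Type*} [Field F] [DecidableEq F] {m : ℕ} (P : Fin m → Finset F)

/-- the full box `{e : ∀ j, e j ≤ n_j - 1}` -/
def fullBox : Finset (Fin m → ℕ) := boxΔ fun j => (P j).card - 1

/-- multivariate indicator function of the point `y` (up to a nonzero scalar) -/
noncomputable def ind (y : MCCPt P) : MCCPt P → F := fun x => ∏ j, (dPoly (P j) (y j : F)).eval (x j : F)

lemma ind_self (y : MCCPt P) : ind P y y ≠ 0 :=
  prod_ne_zero_iff.2 fun j _ => dPoly_eval_self (P j)

lemma ind_ne (y x : MCCPt P) (h : x ≠ y) : ind P y x = 0 := by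
  have : ∃ j, x j ≠ y j := by
    by_contra hc
    push_neg at hc
    exact h (funext hc)
  obtain ⟨j, hj⟩ := this
  exact prod_eq_zero (mem_univ j)
    (dPoly_eval_ne (P j) (x j).2 (fun hc => hj (Subtype.ext hc)))

/-- coefficient vector of the indicator -/
noncomputable def indCoef (y : MCCPt P) : (Fin m → ℕ) → F := fun e => ∏ j, (dPoly (P j) (y j : F)).coeff (e j)

lemma indCoef_expand (y : MCCPt P) :
    ∑ e ∈ fullBox P, indCoef P y e • evMon P e = ind P y := by
  funext x
  have hcard : ∀ j, (dPoly (P j) (y j : F)).natDegree < (P j).card - 1 + 1 := by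
    intro j
    rw [dPoly_natDegree (P j) (y j).2]
    omega
  simp only [Finset.sum_apply, Pi.smul_apply, smul_eq_mul, evMon, ind]
  rw [fullBox, boxΔ]
  rw [show (∑ e ∈ Fintype.piFinset fun j => range (#(P j) - 1 + 1),
      indCoef P y e * ∏ j : Fin m, (x j : F) ^ e j) =
      ∑ e ∈ Fintype.piFinset fun j => range (#(P j) - 1 + 1),
      ∏ j : Fin m, ((dPoly (P j) (y j : F)).coeff (e j) * (x j : F) ^ e j) from
    Finset.sum_congr rfl fun e _ => by rw [indCoef, ← Finset.prod_mul_distrib]]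
  refine Eq.symm ?_
  calc ∏ j : Fin m, eval (x j : F) (dPoly (P j) (y j : F))
      = ∏ j : Fin m, ∑ t ∈ range (#(P j) - 1 + 1),
          (dPoly (P j) (y j : F)).coeff t * (x j : F) ^ t :=
        Finset.prod_congr rfl fun j _ => eval_eq_sum_range' (hcard j) (x j : F)
    _ = _ := Finset.prod_univ_sum _ _

end Interp
set_option linter.unusedSectionVars false
section Span
variable {F : Type*} [Field F] [DecidableEq F] {m : ℕ} (P : Fin m → Finset F)

lemma ind_mem_span (y : MCCPt P) :
    ind P y ∈ Submodule.span F (evMon P '' ↑(fullBox P)) := by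
  rw [← indCoef_expand]
  exact Submodule.sum_mem _ fun e he =>
    Submodule.smul_mem _ _ (Submodule.subset_span ⟨e, he, rfl⟩)

lemma span_fullBox_eq_top :
    Submodule.span F (evMon P '' ↑(fullBox P)) = (⊤ : Submodule F (MCCPt P → F)) := by
  rw [eq_top_iff]
  intro f _
  have hf : f = ∑ y : MCCPt P, (f y / ind P y y) • ind P y := by
    funext x
    rw [Finset.sum_apply]
    rw [Finset.sum_eq_single x]
    · simp only [Pi.smul_apply, smul_eq_mul]
      rw [div_mul_cancel₀ _ (ind_self P x)]
    · intro y _ hyx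
      simp [ind_ne P y x (Ne.symm hyx)]
    · simp
  rw [hf]
  exact Submodule.sum_mem _ fun y _ => Submodule.smul_mem _ _ (ind_mem_span P y)

lemma range_coe_evMon (Δ : Finset (Fin m → ℕ)) :
    Set.range (fun e : Δ => evMon P (e : Fin m → ℕ)) = evMon P '' ↑Δ := by
  rw [show (fun e : Δ => evMon P (e : Fin m → ℕ)) = evMon P ∘ (Subtype.val) from rfl,
    Set.range_comp, Subtype.range_coe]

lemma linIndep_fullBox (hP : ∀ j, 1 ≤ (P j).card) :
    LinearIndependent F (fun e : (fullBox P : Finset (Fin m → ℕ)) => evMon P (e : Fin m → ℕ)) := by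
  rw [linearIndependent_iff_card_eq_finrank_span]
  rw [Set.finrank, range_coe_evMon, span_fullBox_eq_top, finrank_top]
  rw [Module.finrank_pi F]
  rw [Fintype.card_coe, fullBox, boxΔ, Fintype.card_piFinset]
  rw [Fintype.card_pi]
  refine Finset.prod_congr rfl fun j _ => ?_
  rw [Finset.card_range, Fintype.card_coe]
  have := hP j
  omega

lemma linIndep_sub {Δ : Finset (Fin m → ℕ)} (hΔ : Δ ⊆ fullBox P) (hP : ∀ j, 1 ≤ (P j).card) :
    LinearIndependent F (fun e : Δ => evMon P (e : Fin m → ℕ)) := by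
  have h := (linIndep_fullBox P hP).comp
    (fun e : Δ => (⟨(e : Fin m → ℕ), hΔ e.2⟩ : (fullBox P : Finset (Fin m → ℕ))))
    (fun a b hab => Subtype.ext (congrArg Subtype.val hab : _))
  exact h

lemma finrank_MCC {Δ : Finset (Fin m → ℕ)} (hΔ : Δ ⊆ fullBox P) (hP : ∀ j, 1 ≤ (P j).card) :
    Module.finrank F (MCC P Δ) = Δ.card := by
  rw [MCC, ← range_coe_evMon, finrank_span_eq_card (linIndep_sub P hΔ hP), Fintype.card_coe]

lemma coef_extract (hP : ∀ j, 1 ≤ (P j).card) {a : (Fin m → ℕ) → F}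
    (h : ∑ e ∈ fullBox P, a e • evMon P e = 0) : ∀ e ∈ fullBox P, a e = 0 := by
  have h2 : ∑ e : (fullBox P : Finset (Fin m → ℕ)), a (e : Fin m → ℕ) • evMon P (e : Fin m → ℕ) = 0 := by
    rw [Finset.sum_coe_sort (fullBox P) (fun e => a e • evMon P e)]
    exact h
  have := Fintype.linearIndependent_iff.1 (linIndep_fullBox P hP) _ h2
  intro e he
  exact this ⟨e, he⟩

lemma mem_MCC_iff {Δ : Finset (Fin m → ℕ)} {c : MCCPt P → F} :
    c ∈ MCC P Δ ↔ ∃ a : (Fin m → ℕ) → F, c = ∑ e ∈ Δ, a e • evMon P e := by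
  constructor
  · intro hc
    rw [MCC, Finsupp.mem_span_image_iff_linearCombination] at hc
    obtain ⟨l, hl, rfl⟩ := hc
    refine ⟨l, ?_⟩
    rw [Finsupp.linearCombination_apply, Finsupp.sum]
    exact Finset.sum_subset ((Finsupp.mem_supported F l).1 hl) fun e _ he => by
      rw [Finsupp.notMem_support_iff.1 he, zero_smul]
  · rintro ⟨a, rfl⟩
    exact Submodule.sum_mem _ fun e he =>
      Submodule.smul_mem _ _ (Submodule.subset_span ⟨e, he, rfl⟩)

end Span
section Fiber
variable {F : Type*} [Field F] [DecidableEq F] {m : ℕ} (P : Fin m → Finset F) (j0 : Fin m)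

lemma count_nonzero_eval (q : Polynomial F) (hq : q ≠ 0) :
    (P j0).card - q.natDegree ≤
      (Finset.univ.filter fun v : {v // v ∈ P j0} => q.eval (v : F) ≠ 0).card := by
  classical
  have hzero : (Finset.univ.filter fun v : {v // v ∈ P j0} => ¬ q.eval (v : F) ≠ 0).card
      ≤ q.natDegree := by
    have h1 : (Finset.univ.filter fun v : {v // v ∈ P j0} => ¬ q.eval (v : F) ≠ 0).card
        ≤ q.roots.toFinset.card := by
      refine Finset.card_le_card_of_injOn (fun v : {v // v ∈ P j0} => (v : F)) ?_ ?_
      · intro v hv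
        simp only [Finset.mem_filter, not_not] at hv
        simp [Multiset.mem_toFinset, Polynomial.mem_roots hq, Polynomial.IsRoot, (by simpa using hv : q.eval (v : F) = 0)]
      · intro u _ v _ h
        exact Subtype.coe_injective h
    calc (Finset.univ.filter fun v : {v // v ∈ P j0} => ¬ q.eval (v : F) ≠ 0).card
        ≤ q.roots.toFinset.card := h1
      _ ≤ Multiset.card q.roots := Multiset.toFinset_card_le _
      _ ≤ q.natDegree := Polynomial.card_roots' q
  have htot := Finset.card_filter_add_card_filter_not
    (s := (Finset.univ : Finset {v // v ∈ P j0}))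
    (p := fun v : {v // v ∈ P j0} => q.eval (v : F) ≠ 0)
  have hcard : (Finset.univ : Finset {v // v ∈ P j0}).card = (P j0).card := by
    simp [Fintype.card_coe]
  omega

lemma evMon_update (e : Fin m → ℕ) (x : MCCPt P) (v : {v // v ∈ P j0}) :
    evMon P e (Function.update x j0 v) =
      (v : F) ^ e j0 * ∏ j ∈ Finset.univ.erase j0, (x j : F) ^ e j := by
  rw [evMon, ← Finset.mul_prod_erase Finset.univ _ (Finset.mem_univ j0)]
  rw [Function.update_self]
  congr 1
  refine Finset.prod_congr rfl fun j hj => ?_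
  rw [Function.update_of_ne (Finset.ne_of_mem_erase hj)]

/-- the coefficient functions `g_t` -/
def gcoef (a : (Fin m → ℕ) → F) (Δ : Finset (Fin m → ℕ)) (t : ℕ) (x : MCCPt P) : F :=
  ∑ e ∈ Δ.filter (fun e => e j0 = t), a e * ∏ j ∈ Finset.univ.erase j0, (x j : F) ^ e j

/-- the fiber polynomial of `c` through `x` in direction `j0` -/
noncomputable def fibP (a : (Fin m → ℕ) → F) (Δ : Finset (Fin m → ℕ)) (i0 : ℕ) (x : MCCPt P) :
    Polynomial F :=
  ∑ t ∈ Finset.range (i0 + 1), Polynomial.C (gcoef P j0 a Δ t x) * Polynomial.X ^ t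

lemma fibP_natDegree_le (a : (Fin m → ℕ) → F) (Δ : Finset (Fin m → ℕ)) (i0 : ℕ) (x : MCCPt P) :
    (fibP P j0 a Δ i0 x).natDegree ≤ i0 := by
  refine Polynomial.natDegree_sum_le_of_forall_le _ _ fun t ht => ?_
  refine le_trans (Polynomial.natDegree_C_mul_le _ _) ?_
  rw [Polynomial.natDegree_X_pow]
  exact Nat.lt_succ_iff.1 (Finset.mem_range.1 ht)

lemma fibP_coeff (a : (Fin m → ℕ) → F) (Δ : Finset (Fin m → ℕ)) (i0 : ℕ) (x : MCCPt P)
    {t : ℕ} (ht : t ≤ i0) : (fibP P j0 a Δ i0 x).coeff t = gcoef P j0 a Δ t x := by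
  rw [fibP, Polynomial.finset_sum_coeff]
  rw [Finset.sum_eq_single t]
  · simp
  · intro u _ hut
    simp [Polynomial.coeff_C_mul, Polynomial.coeff_X_pow, Ne.symm hut]
  · intro h
    exact absurd (Finset.mem_range.2 (Nat.lt_succ_of_le ht)) h

lemma sum_evMon_update (a : (Fin m → ℕ) → F) (Δ : Finset (Fin m → ℕ)) (i0 : ℕ)
    (hΔ : ∀ e ∈ Δ, e j0 ≤ i0) (x : MCCPt P) (v : {v // v ∈ P j0}) :
    (∑ e ∈ Δ, a e • evMon P e) (Function.update x j0 v) =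
      (fibP P j0 a Δ i0 x).eval (v : F) := by
  rw [fibP, Polynomial.eval_finset_sum]
  rw [Finset.sum_apply]
  rw [← Finset.sum_fiberwise_of_maps_to (g := fun e => e j0)
    (t := Finset.range (i0 + 1)) (fun e he => Finset.mem_range.2 (Nat.lt_succ_of_le (hΔ e he)))
    (fun e => (a e • evMon P e) (Function.update x j0 v))]
  refine Finset.sum_congr rfl fun t _ => ?_
  simp only [Polynomial.eval_mul, Polynomial.eval_C, Polynomial.eval_pow, Polynomial.eval_X,
    gcoef, Finset.sum_mul]
  refine Finset.sum_congr rfl fun e he => ?_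
  have het : e j0 = t := (Finset.mem_filter.1 he).2
  rw [Pi.smul_apply, smul_eq_mul, evMon_update P j0 e x v, het]
  ring

end Fiber

section Upd
variable {F : Type*} [Field F] [DecidableEq F] {m : ℕ} (P : Fin m → Finset F) (j0 : Fin m)

lemma update_injective (x : MCCPt P) :
    Function.Injective (fun v : {v // v ∈ P j0} => Function.update x j0 v) := by
  intro u v h
  have := congrFun h j0
  simpa [Function.update_self] using this

end Upd

section ProdXC
variable {F : Type*} [Field F] [DecidableEq F]
open Polynomial

lemma prodXC_natDegree (Z : Finset F) : (∏ b ∈ Z, (X - C b)).natDegree = Z.card := by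
  rw [Polynomial.natDegree_prod _ _ (fun b _ => Polynomial.X_sub_C_ne_zero b)]
  simp

lemma prodXC_eval_ne (Z : Finset F) {w : F} (hw : w ∉ Z) : (∏ b ∈ Z, (X - C b)).eval w ≠ 0 := by
  rw [Polynomial.eval_prod]
  refine Finset.prod_ne_zero_iff.2 fun b hb => ?_
  simp only [Polynomial.eval_sub, Polynomial.eval_X, Polynomial.eval_C, sub_ne_zero]
  exact fun h => hw (h ▸ hb)

lemma prodXC_eval_eq (Z : Finset F) {w : F} (hw : w ∈ Z) : (∏ b ∈ Z, (X - C b)).eval w = 0 := by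
  rw [Polynomial.eval_prod]
  exact Finset.prod_eq_zero hw (by simp)

end ProdXC
section TopCoef
variable {F : Type*} [Field F] [DecidableEq F] {m : ℕ} (P : Fin m → Finset F)

lemma prodPoly_expand (p : Fin m → Polynomial F) (hdeg : ∀ j, (p j).natDegree < (P j).card) :
    ∑ e ∈ fullBox P, (∏ j, (p j).coeff (e j)) • evMon P e =
      fun x : MCCPt P => ∏ j, (p j).eval (x j : F) := by
  funext x
  have hcard : ∀ j, (p j).natDegree < (P j).card - 1 + 1 := by
    intro j
    have h0 : 1 ≤ (P j).card := Nat.one_le_of_lt (Nat.lt_of_le_of_lt (Nat.zero_le _) (hdeg j))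
    have := hdeg j
    omega
  simp only [Finset.sum_apply, Pi.smul_apply, smul_eq_mul, evMon]
  rw [fullBox, boxΔ]
  rw [show (∑ e ∈ Fintype.piFinset fun j => Finset.range ((P j).card - 1 + 1),
      (∏ j, (p j).coeff (e j)) * ∏ j : Fin m, (x j : F) ^ e j) =
      ∑ e ∈ Fintype.piFinset fun j => Finset.range ((P j).card - 1 + 1),
      ∏ j : Fin m, ((p j).coeff (e j) * (x j : F) ^ e j) from
    Finset.sum_congr rfl fun e _ => by rw [← Finset.prod_mul_distrib]]
  refine Eq.symm ?_
  calc ∏ j : Fin m, Polynomial.eval (x j : F) (p j)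
      = ∏ j : Fin m, ∑ t ∈ Finset.range ((P j).card - 1 + 1),
          (p j).coeff t * (x j : F) ^ t :=
        Finset.prod_congr rfl fun j _ => Polynomial.eval_eq_sum_range' (hcard j) (x j : F)
    _ = _ := Finset.prod_univ_sum _ _

lemma topcoef_vanish (hP : ∀ j, 1 ≤ (P j).card) (j0 : Fin m)
    (D : Finset (Fin m → ℕ)) (hD0 : ∀ e ∈ D, e j0 = 0)
    (hDbox : ∀ e ∈ D, ∀ j, e j ≤ (P j).card - 1)
    (hDtop : ∀ e ∈ D, ∃ j, j ≠ j0 ∧ e j ≠ (P j).card - 1)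
    (a : (Fin m → ℕ) → F) (x0 : MCCPt P)
    (hvan : ∀ x : MCCPt P, (∃ j, j ≠ j0 ∧ x j ≠ x0 j) → ∑ e ∈ D, a e * evMon P e x = 0) :
    ∑ e ∈ D, a e * evMon P e x0 = 0 := by
  classical
  set δp : Polynomial F := dPoly (P j0) ((x0 j0 : F)) with hδp
  set S : F := ∑ e ∈ D, a e * evMon P e x0 with hS
  set μ : F := S * δp.eval ((x0 j0 : F)) / ind P x0 x0 with hμ
  -- the two-sided description of G'' = c · δp(x_{j0})
  have key : (fun x : MCCPt P => (∑ e ∈ D, a e * evMon P e x) * δp.eval ((x j0 : F))) =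
      μ • ind P x0 := by
    funext x
    by_cases hx : ∃ j, j ≠ j0 ∧ x j ≠ x0 j
    · have hne : x ≠ x0 := by
        obtain ⟨j, _, hj⟩ := hx
        exact fun h => hj (congrFun h j)
      rw [hvan x hx, zero_mul, Pi.smul_apply, ind_ne P x0 x hne, smul_zero]
    · by_cases hxx : x = x0
      · subst hxx
        rw [Pi.smul_apply, smul_eq_mul, hμ, ← hS,
          div_mul_cancel₀ _ (ind_self P x)]
      · push_neg at hx
        have hj0 : x j0 ≠ x0 j0 := by
          intro h
          exact hxx (funext fun j => by
            by_cases hj : j = j0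
            · subst hj; exact h
            · exact hx j hj)
        have : δp.eval ((x j0 : F)) = 0 := by
          refine dPoly_eval_ne (P j0) (x j0).2 fun h => hj0 (Subtype.ext h)
        rw [this, mul_zero, Pi.smul_apply, ind_ne P x0 x hxx, smul_zero]
  -- expansion of G'' over the full box
  set pp : (Fin m → ℕ) → Fin m → Polynomial F :=
    fun e j => if j = j0 then δp else Polynomial.X ^ (e j) with hpp
  have hdeg : ∀ e ∈ D, ∀ j, (pp e j).natDegree < (P j).card := by
    intro e he j
    by_cases hj : j = j0
    · rw [hj]
      simp only [hpp, if_pos rfl]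
      rw [dPoly_natDegree (P j0) (x0 j0).2]
      have := hP j0
      omega
    · simp only [hpp, if_neg hj, Polynomial.natDegree_X_pow]
      have h1 := hDbox e he j
      have := hP j
      omega
  have hpe : ∀ e ∈ D, ∀ x : MCCPt P,
      evMon P e x * δp.eval ((x j0 : F)) = ∏ j, (pp e j).eval (x j : F) := by
    intro e he x
    rw [evMon, ← Finset.mul_prod_erase Finset.univ _ (Finset.mem_univ j0),
      ← Finset.mul_prod_erase Finset.univ (fun j => (pp e j).eval (x j : F)) (Finset.mem_univ j0)]
    simp only [hpp, if_pos rfl]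
    rw [hD0 e he, pow_zero, one_mul]
    rw [mul_comm]
    congr 1
    refine Finset.prod_congr rfl fun j hj => ?_
    rw [if_neg (Finset.ne_of_mem_erase hj), Polynomial.eval_pow, Polynomial.eval_X]
  have expand : (fun x : MCCPt P => (∑ e ∈ D, a e * evMon P e x) * δp.eval ((x j0 : F))) =
      ∑ e' ∈ fullBox P, (∑ e ∈ D, a e * ∏ j, (pp e j).coeff (e' j)) • evMon P e' := by
    funext x
    rw [Finset.sum_mul]
    have h1 : ∀ e ∈ D, a e * evMon P e x * δp.eval ((x j0 : F)) =
        ∑ e' ∈ fullBox P, a e * ((∏ j, (pp e j).coeff (e' j)) * evMon P e' x) := by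
      intro e he
      rw [mul_assoc, hpe e he x, ← congrFun (prodPoly_expand P (pp e) (hdeg e he)) x]
      rw [Finset.sum_apply, Finset.mul_sum]
      refine Finset.sum_congr rfl fun e' _ => ?_
      rw [Pi.smul_apply, smul_eq_mul]
    rw [Finset.sum_congr rfl h1, Finset.sum_comm]
    rw [Finset.sum_apply]
    refine Finset.sum_congr rfl fun e' _ => ?_
    rw [Pi.smul_apply, smul_eq_mul, Finset.sum_mul]
    refine Finset.sum_congr rfl fun e he => ?_
    ring
  -- subtract the indicator expansion and extract the top coefficient
  have hzero : ∑ e' ∈ fullBox P,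
      ((∑ e ∈ D, a e * ∏ j, (pp e j).coeff (e' j)) - μ * indCoef P x0 e') • evMon P e' = 0 := by
    have : ∑ e' ∈ fullBox P,
        ((∑ e ∈ D, a e * ∏ j, (pp e j).coeff (e' j)) - μ * indCoef P x0 e') • evMon P e' =
        (∑ e' ∈ fullBox P, (∑ e ∈ D, a e * ∏ j, (pp e j).coeff (e' j)) • evMon P e') -
        μ • ∑ e' ∈ fullBox P, indCoef P x0 e' • evMon P e' := by
      rw [Finset.smul_sum, ← Finset.sum_sub_distrib]
      refine Finset.sum_congr rfl fun e' _ => ?_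
      rw [sub_smul, smul_smul]
    rw [this, indCoef_expand, ← expand, key, sub_self]
  have hextract := coef_extract P hP hzero (fun j => (P j).card - 1) (by
    rw [fullBox, boxΔ, Fintype.mem_piFinset]
    intro j
    exact Finset.mem_range.2 (by omega))
  -- compute the two top coefficients
  have hindtop : indCoef P x0 (fun j => (P j).card - 1) = 1 := by
    rw [indCoef]
    refine Finset.prod_eq_one fun j _ => dPoly_coeff_top (P j) (x0 j).2
  have hBtop : ∑ e ∈ D, a e * ∏ j, (pp e j).coeff ((fun j => (P j).card - 1) j) = 0 := by
    refine Finset.sum_eq_zero fun e he => ?_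
    obtain ⟨j1, hj1, hj1e⟩ := hDtop e he
    have : (pp e j1).coeff ((P j1).card - 1) = 0 := by
      simp only [hpp, if_neg hj1, Polynomial.coeff_X_pow]
      exact if_neg fun h => hj1e h.symm
    rw [Finset.prod_eq_zero (Finset.mem_univ j1) this, mul_zero]
  rw [hBtop, hindtop, mul_one, zero_sub, neg_eq_zero, hμ] at hextract
  have hSl : S * δp.eval ((x0 j0 : F)) = 0 := by
    have := div_eq_zero_iff.1 hextract
    rcases this with h | h
    · exact h
    · exact absurd h (ind_self P x0)
  rcases mul_eq_zero.1 hSl with h | h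
  · exact h
  · exact absurd h (dPoly_eval_self (P j0))

end TopCoef
theorem mcc_hyperrectelim_optimal
    {F : Type*} [Field F] [Fintype F] [DecidableEq F] {m : ℕ} (hm : 3 ≤ m)
    (P : Fin m → Finset F) (hP : ∀ j, 2 ≤ (P j).card)
    (j0 : Fin m) (i0 s : ℕ)
    (hcase : (max 1 (2 * i0 + 1 - (P j0).card) ≤ s ∧ s ≤ i0 ∧ i0 ≤ (P j0).card - 2) ∨
      (i0 = 0 ∧ s = 0)) :
    IsOptimalLRC
      (MCC P ((boxΔ fun j => if j = j0 then i0 else (P j).card - 1) \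
        ((Finset.Icc s i0).image fun t => fun j => if j = j0 then t else (P j).card - 1)))
      (((i0 + 1) * ∏ j ∈ Finset.univ.erase j0, (P j).card) - (i0 - s + 1))
      (if 1 ≤ s then (P j0).card - s + 1 else 2 * (P j0).card)
      (i0 + 1) ((P j0).card - i0) := by
  classical
  have hP1 : ∀ j, 1 ≤ (P j).card := fun j => le_trans (by norm_num) (hP j)
  have hn0 : 2 ≤ (P j0).card := hP j0
  have hs_le : s ≤ i0 := by rcases hcase with ⟨_, h, _⟩ | ⟨h1, h2⟩ <;> omega
  have hi0n : i0 + 2 ≤ (P j0).card := by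
    rcases hcase with ⟨_, _, h⟩ | ⟨h1, h2⟩ <;> omega
  have hsmax : 2 * i0 + 1 - (P j0).card ≤ s := by
    rcases hcase with ⟨h, _, _⟩ | ⟨h1, h2⟩
    · exact le_trans (le_max_right _ _) h
    · omega
  set n0 : ℕ := (P j0).card with hn0def
  set Δ : Finset (Fin m → ℕ) :=
    (boxΔ fun j => if j = j0 then i0 else (P j).card - 1) \
      ((Finset.Icc s i0).image fun t => fun j => if j = j0 then t else (P j).card - 1) with hΔdef
  -- membership facts
  have hbox_mem : ∀ e : Fin m → ℕ,
      e ∈ (boxΔ fun j => if j = j0 then i0 else (P j).card - 1) ↔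
        ∀ j, e j ≤ (if j = j0 then i0 else (P j).card - 1) := by
    intro e
    simp [boxΔ, Fintype.mem_piFinset, Nat.lt_succ_iff]
  have him_mem : ∀ e : Fin m → ℕ, e j0 ≤ i0 →
      (e ∈ (Finset.Icc s i0).image (fun t => fun j => if j = j0 then t else (P j).card - 1) ↔
        (s ≤ e j0 ∧ ∀ j, j ≠ j0 → e j = (P j).card - 1)) := by
    intro e he
    constructor
    · intro h
      obtain ⟨t, ht, rfl⟩ := Finset.mem_image.1 h
      have ht' := Finset.mem_Icc.1 ht
      refine ⟨by simp [ht'.1], fun j hj => by simp [hj]⟩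
    · rintro ⟨h1, h2⟩
      refine Finset.mem_image.2 ⟨e j0, Finset.mem_Icc.2 ⟨h1, he⟩, ?_⟩
      funext j
      by_cases hj : j = j0
      · subst hj; simp
      · simp [hj, h2 j hj]
  have hΔj0 : ∀ e ∈ Δ, e j0 ≤ i0 := by
    intro e he
    have := ((hbox_mem e).1 (Finset.mem_sdiff.1 he).1) j0
    simpa using this
  have hΔ_box : ∀ e ∈ Δ, ∀ j, e j ≤ (P j).card - 1 := by
    intro e he j
    have := ((hbox_mem e).1 (Finset.mem_sdiff.1 he).1) j
    by_cases hj : j = j0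
    · rw [hj] at this ⊢
      rw [if_pos rfl] at this
      omega
    · simpa [hj] using this
  have hΔ_sub : Δ ⊆ fullBox P := by
    intro e he
    rw [fullBox, boxΔ, Fintype.mem_piFinset]
    intro j
    exact Finset.mem_range.2 (by have := hΔ_box e he j; omega)
  have hΔ_mem : ∀ e : Fin m → ℕ,
      e ∈ Δ ↔ ((∀ j, e j ≤ (if j = j0 then i0 else (P j).card - 1)) ∧
        ¬(s ≤ e j0 ∧ ∀ j, j ≠ j0 → e j = (P j).card - 1)) := by
    intro e
    rw [hΔdef, Finset.mem_sdiff, hbox_mem]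
    constructor
    · rintro ⟨h1, h2⟩
      refine ⟨h1, fun hc => h2 ((him_mem e (by simpa using h1 j0)).2 hc)⟩
    · rintro ⟨h1, h2⟩
      refine ⟨h1, fun hc => h2 ((him_mem e (by simpa using h1 j0)).1 hc)⟩
  -- cardinality of Δ
  have hNbig : 2 ≤ ∏ j ∈ Finset.univ.erase j0, (P j).card := by
    obtain ⟨j1, hj1⟩ : ∃ j1 : Fin m, j1 ≠ j0 := by
      have : Nontrivial (Fin m) := Fin.nontrivial_iff_two_le.2 (by omega)
      exact exists_ne j0
    calc 2 ≤ (P j1).card := hP j1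
      _ ≤ ∏ j ∈ Finset.univ.erase j0, (P j).card :=
        Finset.single_le_prod' (fun j _ => hP1 j) (Finset.mem_erase.2 ⟨hj1, Finset.mem_univ j1⟩)
  have hΔcard : Δ.card = (i0 + 1) * (∏ j ∈ Finset.univ.erase j0, (P j).card) - (i0 - s + 1) := by
    have hsub : (Finset.Icc s i0).image (fun t => fun j => if j = j0 then t else (P j).card - 1) ⊆
        (boxΔ fun j => if j = j0 then i0 else (P j).card - 1) := by
      intro e he
      obtain ⟨t, ht, rfl⟩ := Finset.mem_image.1 he
      rw [hbox_mem]
      intro j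
      by_cases hj : j = j0
      · simp [hj, (Finset.mem_Icc.1 ht).2]
      · simp [hj]
    have hinj : Set.InjOn (fun t => fun j => if j = j0 then t else (P j).card - 1)
        (Finset.Icc s i0 : Finset ℕ) := by
      intro t1 _ t2 _ h
      have := congrFun h j0
      simpa using this
    rw [hΔdef, Finset.card_sdiff_of_subset hsub, Finset.card_image_of_injOn hinj, Nat.card_Icc]
    have hbc : (boxΔ fun j => if j = j0 then i0 else (P j).card - 1).card =
        (i0 + 1) * ∏ j ∈ Finset.univ.erase j0, (P j).card := by
      rw [boxΔ, Fintype.card_piFinset]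
      rw [← Finset.mul_prod_erase Finset.univ
        (fun j => (Finset.range ((if j = j0 then i0 else (P j).card - 1) + 1)).card)
        (Finset.mem_univ j0)]
      simp only [Finset.card_range, if_pos rfl]
      congr 1
      refine Finset.prod_congr rfl fun j hj => ?_
      rw [if_neg (Finset.ne_of_mem_erase hj)]
      have := hP1 j
      omega
    rw [hbc]
    congr 1
    omega
  -- the (r,δ) locality
  have hLRC : IsLRC (MCC P Δ) (i0 + 1) (n0 - i0) := by
    intro x
    refine ⟨Finset.univ.image (fun v : {v // v ∈ P j0} => Function.update x j0 v), ?_, ?_, ?_⟩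
    · exact Finset.mem_image.2 ⟨x j0, Finset.mem_univ _, Function.update_eq_self j0 x⟩
    · refine le_trans Finset.card_image_le ?_
      have : (Finset.univ : Finset {v // v ∈ P j0}).card = n0 := by
        simp [Fintype.card_coe, hn0def]
      omega
    · intro c hc hex
      obtain ⟨a, rfl⟩ := (mem_MCC_iff P).1 hc
      obtain ⟨y, hy, hcy⟩ := hex
      obtain ⟨v, _, rfl⟩ := Finset.mem_image.1 hy
      have hq : fibP P j0 a Δ i0 x ≠ 0 := by
        intro h0
        apply hcy
        rw [sum_evMon_update P j0 a Δ i0 hΔj0 x v, h0, Polynomial.eval_zero]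
      rw [Finset.filter_image, Finset.card_image_of_injective _ (update_injective P j0 x)]
      have hcount := count_nonzero_eval P j0 _ hq
      have hfe : (Finset.univ.filter fun v : {v // v ∈ P j0} =>
          (∑ e ∈ Δ, a e • evMon P e) (Function.update x j0 v) ≠ 0) =
          (Finset.univ.filter fun v : {v // v ∈ P j0} =>
          (fibP P j0 a Δ i0 x).eval (v : F) ≠ 0) := by
        refine Finset.filter_congr fun v _ => ?_
        rw [sum_evMon_update P j0 a Δ i0 hΔj0 x v]
      rw [hfe]
      have hdeg := fibP_natDegree_le P j0 a Δ i0 x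
      omega
  -- minimum distance
  have hi00 : ¬ 1 ≤ s → i0 = 0 := by
    intro h
    rcases hcase with ⟨hh, _, _⟩ | ⟨h1, h2⟩
    · exact absurd (le_trans (le_max_left _ _) hh) h
    · exact h1
  have hMD : HasMinDist (MCC P Δ) (if 1 ≤ s then n0 - s + 1 else 2 * n0) := by
    constructor
    · -- lower bound on the weight of nonzero codewords
      intro c hc hc0
      obtain ⟨a, rfl⟩ := (mem_MCC_iff P).1 hc
      unfold hammingNorm
      obtain ⟨x0, hx0⟩ := Function.ne_iff.1 hc0
      have hfe : ∀ x : MCCPt P, (Finset.univ.filter fun v : {v // v ∈ P j0} =>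
          (∑ e ∈ Δ, a e • evMon P e) (Function.update x j0 v) ≠ 0) =
          (Finset.univ.filter fun v : {v // v ∈ P j0} =>
          (fibP P j0 a Δ i0 x).eval (v : F) ≠ 0) := by
        intro x
        refine Finset.filter_congr fun v _ => ?_
        rw [sum_evMon_update P j0 a Δ i0 hΔj0 x v]
      have hfibcnt : ∀ (x : MCCPt P) (Dg : ℕ), (fibP P j0 a Δ i0 x).natDegree ≤ Dg →
          fibP P j0 a Δ i0 x ≠ 0 →
          n0 - Dg ≤ (Finset.univ.filter fun v : {v // v ∈ P j0} =>
            (∑ e ∈ Δ, a e • evMon P e) (Function.update x j0 v) ≠ 0).card := by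
        intro x Dg hdeg hq
        have hcount := count_nonzero_eval P j0 _ hq
        rw [hfe x]
        omega
      have hfib_ne : ∀ x : MCCPt P, (∑ e ∈ Δ, a e • evMon P e) x ≠ 0 →
          fibP P j0 a Δ i0 x ≠ 0 := by
        intro x hx h0
        apply hx
        have := sum_evMon_update P j0 a Δ i0 hΔj0 x (x j0)
        rw [Function.update_eq_self] at this
        rw [this, h0, Polynomial.eval_zero]
      set T : MCCPt P → Finset (MCCPt P) := fun x =>
        (Finset.univ.filter fun v : {v // v ∈ P j0} =>
          (∑ e ∈ Δ, a e • evMon P e) (Function.update x j0 v) ≠ 0).image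
          (fun v => Function.update x j0 v) with hT
      have hTcard : ∀ x : MCCPt P, (T x).card =
          (Finset.univ.filter fun v : {v // v ∈ P j0} =>
          (∑ e ∈ Δ, a e • evMon P e) (Function.update x j0 v) ≠ 0).card := fun x =>
        Finset.card_image_of_injective _ (update_injective P j0 x)
      have hTsub : ∀ x : MCCPt P, T x ⊆
          Finset.univ.filter fun y => (∑ e ∈ Δ, a e • evMon P e) y ≠ 0 := by
        intro x y hy
        obtain ⟨v, hv, rfl⟩ := Finset.mem_image.1 hy
        exact Finset.mem_filter.2 ⟨Finset.mem_univ _, (Finset.mem_filter.1 hv).2⟩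
      by_cases hsep : ∃ x1 : MCCPt P,
          (∑ e ∈ Δ, a e • evMon P e) x1 ≠ 0 ∧ ∃ j, j ≠ j0 ∧ x1 j ≠ x0 j
      · obtain ⟨x1, hx1, j1, hj1, hx1j⟩ := hsep
        have h0 : n0 - i0 ≤ (T x0).card := by
          rw [hTcard]
          exact hfibcnt x0 i0 (fibP_natDegree_le P j0 a Δ i0 x0) (hfib_ne x0 hx0)
        have h1 : n0 - i0 ≤ (T x1).card := by
          rw [hTcard]
          exact hfibcnt x1 i0 (fibP_natDegree_le P j0 a Δ i0 x1) (hfib_ne x1 hx1)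
        have hdisj : Disjoint (T x0) (T x1) := by
          rw [Finset.disjoint_left]
          rintro y hy0 hy1
          obtain ⟨v, _, rfl⟩ := Finset.mem_image.1 hy0
          obtain ⟨w, _, hw⟩ := Finset.mem_image.1 hy1
          have h1' := congrFun hw j1
          rw [Function.update_of_ne hj1, Function.update_of_ne hj1] at h1'
          exact hx1j (h1'.symm ▸ rfl)
        have hcup := Finset.card_le_card (Finset.union_subset (hTsub x0) (hTsub x1))
        rw [Finset.card_union_of_disjoint hdisj] at hcup
        by_cases hs1 : 1 ≤ s
        · rw [if_pos hs1]
          omega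
        · rw [if_neg hs1]
          have := hi00 hs1
          omega
      · push_neg at hsep
        have hvanpoly : ∀ x : MCCPt P, (∃ j, j ≠ j0 ∧ x j ≠ x0 j) →
            fibP P j0 a Δ i0 x = 0 := by
          rintro x ⟨j1, hj1, hxj⟩
          refine Polynomial.eq_zero_of_natDegree_lt_card_of_eval_eq_zero _
            (f := fun v : {v // v ∈ P j0} => (v : F)) Subtype.coe_injective ?_ ?_
          · intro v
            rw [← sum_evMon_update P j0 a Δ i0 hΔj0 x v]
            by_contra hne
            have := hsep _ hne j1 hj1
            rw [Function.update_of_ne hj1] at this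
            exact hxj this
          · have h1 := fibP_natDegree_le P j0 a Δ i0 x
            have h2 : Fintype.card {v // v ∈ P j0} = n0 := Fintype.card_coe _
            omega
        have hgsum : ∀ (t : ℕ) (x : MCCPt P),
            ∑ e' ∈ (Δ.filter fun e => e j0 = t).image (fun e => Function.update e j0 0),
              a (Function.update e' j0 t) * evMon P e' x = gcoef P j0 a Δ t x := by
          intro t x
          rw [Finset.sum_image (by
            intro e1 he1 e2 he2 h
            funext j
            by_cases hj : j = j0
            · rw [hj, (Finset.mem_filter.1 he1).2, (Finset.mem_filter.1 he2).2]
            · have : Function.update e1 j0 0 j = Function.update e2 j0 0 j := congrFun h j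
              rwa [Function.update_of_ne hj, Function.update_of_ne hj] at this)]
          refine Finset.sum_congr rfl fun e he => ?_
          have het : e j0 = t := (Finset.mem_filter.1 he).2
          rw [Function.update_idem, ← het, Function.update_eq_self]
          congr 1
          rw [evMon, ← Finset.mul_prod_erase Finset.univ _ (Finset.mem_univ j0),
            Function.update_self, pow_zero, one_mul]
          refine Finset.prod_congr rfl fun j hj => ?_
          rw [Function.update_of_ne (Finset.ne_of_mem_erase hj)]
        have hgvan : ∀ t, s ≤ t → t ≤ i0 → gcoef P j0 a Δ t x0 = 0 := by
          intro t hst hti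
          rw [← hgsum t x0]
          refine topcoef_vanish P hP1 j0 _ ?_ ?_ ?_ _ x0 ?_
          · intro e' he'
            obtain ⟨e, he, rfl⟩ := Finset.mem_image.1 he'
            exact Function.update_self j0 0 e
          · intro e' he' j
            obtain ⟨e, he, rfl⟩ := Finset.mem_image.1 he'
            by_cases hj : j = j0
            · rw [hj, Function.update_self]
              omega
            · rw [Function.update_of_ne hj]
              exact hΔ_box e (Finset.mem_filter.1 he).1 j
          · intro e' he'
            obtain ⟨e, he, rfl⟩ := Finset.mem_image.1 he'
            by_contra hcon
            push_neg at hcon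
            have heΔ := (Finset.mem_filter.1 he).1
            have het : e j0 = t := (Finset.mem_filter.1 he).2
            refine ((hΔ_mem e).1 heΔ).2 ⟨by omega, fun j hj => ?_⟩
            have := hcon j hj
            rwa [Function.update_of_ne hj] at this
          · intro x hx
            rw [hgsum t x, ← fibP_coeff P j0 a Δ i0 x hti, hvanpoly x hx,
              Polynomial.coeff_zero]
        have hq0 : fibP P j0 a Δ i0 x0 ≠ 0 := hfib_ne x0 hx0
        by_cases hs1 : 1 ≤ s
        · rw [if_pos hs1]
          have hdeg0 : (fibP P j0 a Δ i0 x0).natDegree ≤ s - 1 := by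
            rw [Polynomial.natDegree_le_iff_coeff_eq_zero]
            intro N hN
            by_cases hNi : N ≤ i0
            · rw [fibP_coeff P j0 a Δ i0 x0 hNi]
              exact hgvan N (by omega) hNi
            · exact Polynomial.coeff_eq_zero_of_natDegree_lt
                (lt_of_le_of_lt (fibP_natDegree_le P j0 a Δ i0 x0) (by omega))
          have hcnt : n0 - (s - 1) ≤ (T x0).card := by
            rw [hTcard]
            exact hfibcnt x0 (s - 1) hdeg0 hq0
          have := Finset.card_le_card (hTsub x0)
          omega
        · exfalso
          have hi0' := hi00 hs1
          apply hq0
          rw [fibP]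
          refine Finset.sum_eq_zero fun t ht => ?_
          rw [hgvan t (by omega) (Nat.lt_succ_iff.1 (Finset.mem_range.1 ht)),
            Polynomial.C_0, zero_mul]
    · -- a codeword of minimal weight
      have hPne : ∀ j, (P j).Nonempty := fun j => Finset.card_pos.1 (by have := hP1 j; omega)
      set y : MCCPt P := fun j => ⟨(hPne j).choose, (hPne j).choose_spec⟩ with hy
      by_cases hs1 : 1 ≤ s
      · -- case s ≥ 1
        obtain ⟨Z, hZsub, hZcard⟩ := Finset.exists_subset_card_eq
          (show s - 1 ≤ (P j0).card by omega)
        set u : Polynomial F := ∏ b ∈ Z, (Polynomial.X - Polynomial.C b) with hu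
        have hudeg : u.natDegree = s - 1 := by rw [hu, prodXC_natDegree, hZcard]
        set p : Fin m → Polynomial F :=
          fun j => if j = j0 then u else dPoly (P j) ((y j : F)) with hp
        have hpdeg : ∀ j, (p j).natDegree < (P j).card := by
          intro j
          by_cases hj : j = j0
          · rw [hj]
            simp only [hp, if_pos rfl]
            omega
          · simp only [hp, if_neg hj]
            rw [dPoly_natDegree (P j) (y j).2]
            have := hP1 j
            omega
        set c0 : MCCPt P → F := fun x => ∏ j, (p j).eval ((x j : F)) with hc0
        have hexp := prodPoly_expand P p hpdeg
        have hAvan : ∀ e ∈ fullBox P, e ∉ Δ → (∏ j, (p j).coeff (e j)) • evMon P e = 0 := by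
          intro e hef heΔ
          have hse : s ≤ e j0 := by
            by_contra hlt
            push_neg at hlt
            refine heΔ ((hΔ_mem e).2 ⟨fun j => ?_, fun hc => by omega⟩)
            by_cases hj : j = j0
            · rw [hj, if_pos rfl]
              omega
            · rw [if_neg hj]
              rw [fullBox, boxΔ, Fintype.mem_piFinset] at hef
              have := Finset.mem_range.1 (hef j)
              omega
          have : (p j0).coeff (e j0) = 0 := by
            simp only [hp, if_pos rfl]
            exact Polynomial.coeff_eq_zero_of_natDegree_lt (by omega)
          rw [Finset.prod_eq_zero (Finset.mem_univ j0) this, zero_smul]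
        have hmem : c0 ∈ MCC P Δ := by
          refine (mem_MCC_iff P).2 ⟨fun e => ∏ j, (p j).coeff (e j), ?_⟩
          rw [Finset.sum_subset hΔ_sub hAvan, hexp]
        have hchar : ∀ x : MCCPt P, c0 x ≠ 0 ↔
            ((x j0 : F) ∉ Z ∧ ∀ j, j ≠ j0 → x j = y j) := by
          intro x
          constructor
          · intro hx
            have hfac := Finset.prod_ne_zero_iff.1 hx
            constructor
            · intro hin
              refine hfac j0 (Finset.mem_univ _) ?_
              simp only [hp, if_pos rfl, hu]
              exact prodXC_eval_eq Z hin
            · intro j hj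
              have := hfac j (Finset.mem_univ _)
              simp only [hp, if_neg hj] at this
              by_contra hne
              exact this (dPoly_eval_ne (P j) (x j).2 fun h => hne (Subtype.ext h))
          · rintro ⟨h1, h2⟩
            refine Finset.prod_ne_zero_iff.2 fun j _ => ?_
            by_cases hj : j = j0
            · rw [hj]
              simp only [hp, if_pos rfl, hu]
              exact prodXC_eval_ne Z h1
            · simp only [hp, if_neg hj, h2 j hj]
              exact dPoly_eval_self (P j)
        have hfilter : (Finset.univ.filter fun x : MCCPt P => c0 x ≠ 0) =
            (Finset.univ.filter fun v : {v // v ∈ P j0} => (v : F) ∉ Z).image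
              (fun v => Function.update y j0 v) := by
          ext x
          simp only [Finset.mem_filter, Finset.mem_univ, true_and, Finset.mem_image]
          constructor
          · intro hx
            obtain ⟨h1, h2⟩ := (hchar x).1 hx
            refine ⟨x j0, h1, ?_⟩
            funext j
            by_cases hj : j = j0
            · rw [hj, Function.update_self]
            · rw [Function.update_of_ne hj, h2 j hj]
          · rintro ⟨v, hv, rfl⟩
            refine (hchar _).2 ⟨?_, fun j hj => Function.update_of_ne hj _ _⟩
            rwa [Function.update_self]
        have hZcount : (Finset.univ.filter fun v : {v // v ∈ P j0} => (v : F) ∈ Z).card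
            = s - 1 := by
          rw [← hZcard]
          refine Finset.card_bij (fun v _ => (v : F)) ?_ ?_ ?_
          · intro v hv
            exact (Finset.mem_filter.1 hv).2
          · intro v _ w _ h
            exact Subtype.coe_injective h
          · intro b hb
            exact ⟨⟨b, hZsub hb⟩, Finset.mem_filter.2 ⟨Finset.mem_univ _, hb⟩, rfl⟩
        have htot := Finset.card_filter_add_card_filter_not
          (s := (Finset.univ : Finset {v // v ∈ P j0}))
          (p := fun v : {v // v ∈ P j0} => (v : F) ∈ Z)
        have hucard : (Finset.univ : Finset {v // v ∈ P j0}).card = n0 := by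
          simp [Fintype.card_coe, hn0def]
        have hwit : ∃ x : MCCPt P, c0 x ≠ 0 := by
          have hsd : (P j0 \ Z).Nonempty := by
            refine Finset.card_pos.1 ?_
            rw [Finset.card_sdiff_of_subset hZsub]
            omega
          obtain ⟨w, hw⟩ := hsd
          obtain ⟨hwP, hwZ⟩ := Finset.mem_sdiff.1 hw
          refine ⟨Function.update y j0 ⟨w, hwP⟩, (hchar _).2
            ⟨by rwa [Function.update_self], fun j hj => Function.update_of_ne hj _ _⟩⟩
        obtain ⟨xs, hxs⟩ := hwit
        refine ⟨c0, hmem, Function.ne_iff.2 ⟨xs, hxs⟩, ?_⟩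
        unfold hammingNorm
        rw [if_pos hs1]
        rw [hfilter, Finset.card_image_of_injective _ (update_injective P j0 y)]
        omega
      · -- case s = 0
        have hi0' : i0 = 0 := hi00 hs1
        have hs0 : s = 0 := by omega
        obtain ⟨j1, hj1⟩ : ∃ j1 : Fin m, j1 ≠ j0 := by
          have : Nontrivial (Fin m) := Fin.nontrivial_iff_two_le.2 (by omega)
          exact exists_ne j0
        have h1lt : 1 < (P j1).card := lt_of_lt_of_le one_lt_two (hP j1)
        obtain ⟨b1, hb1P, hb1ne⟩ := Finset.exists_mem_ne h1lt ((y j1 : F))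
        set y' : MCCPt P := Function.update y j1 ⟨b1, hb1P⟩ with hy'
        have hyy'v : (y' j1 : F) ≠ (y j1 : F) := by
          rw [hy', Function.update_self]
          exact hb1ne
        have hyy' : y' j1 ≠ y j1 := fun h => hyy'v (congrArg Subtype.val h)
        set p : Fin m → Polynomial F :=
          fun j => if j = j0 then 1 else dPoly (P j) ((y j : F)) with hp
        set p' : Fin m → Polynomial F :=
          fun j => if j = j0 then 1 else dPoly (P j) ((y' j : F)) with hp'
        have hpdeg : ∀ j, (p j).natDegree < (P j).card := by
          intro j
          by_cases hj : j = j0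
          · rw [hj]
            simp only [hp, if_pos rfl, Polynomial.natDegree_one]
            omega
          · simp only [hp, if_neg hj]
            rw [dPoly_natDegree (P j) (y j).2]
            have := hP1 j
            omega
        have hp'deg : ∀ j, (p' j).natDegree < (P j).card := by
          intro j
          by_cases hj : j = j0
          · rw [hj]
            simp only [hp', if_pos rfl, Polynomial.natDegree_one]
            omega
          · simp only [hp', if_neg hj]
            rw [dPoly_natDegree (P j) (y' j).2]
            have := hP1 j
            omega
        set c0 : MCCPt P → F := fun x =>
          (∏ j, (p j).eval ((x j : F))) - ∏ j, (p' j).eval ((x j : F)) with hc0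
        set A : (Fin m → ℕ) → F :=
          fun e => (∏ j, (p j).coeff (e j)) - ∏ j, (p' j).coeff (e j) with hA
        have hexp := prodPoly_expand P p hpdeg
        have hexp' := prodPoly_expand P p' hp'deg
        have hrep : c0 = ∑ e ∈ fullBox P, A e • evMon P e := by
          funext x
          rw [Finset.sum_apply]
          calc c0 x = (∑ e ∈ fullBox P, (∏ j, (p j).coeff (e j)) • evMon P e) x -
              (∑ e ∈ fullBox P, (∏ j, (p' j).coeff (e j)) • evMon P e) x := by
                rw [hexp, hexp']
            _ = ∑ e ∈ fullBox P, (A e • evMon P e) x := by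
                rw [Finset.sum_apply, Finset.sum_apply, ← Finset.sum_sub_distrib]
                refine Finset.sum_congr rfl fun e _ => ?_
                simp only [Pi.smul_apply, smul_eq_mul, hA]
                ring
        have hAvan : ∀ e ∈ fullBox P, e ∉ Δ → A e • evMon P e = 0 := by
          intro e hef heΔ
          by_cases h0 : e j0 = 0
          · have hbc : ∀ j, e j ≤ if j = j0 then i0 else (P j).card - 1 := by
              intro j
              by_cases hj : j = j0
              · rw [hj, if_pos rfl, h0]
                omega
              · rw [if_neg hj]
                rw [fullBox, boxΔ, Fintype.mem_piFinset] at hef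
                have := Finset.mem_range.1 (hef j)
                omega
            have hrem : s ≤ e j0 ∧ ∀ j, j ≠ j0 → e j = (P j).card - 1 := by
              by_contra hr
              exact heΔ ((hΔ_mem e).2 ⟨hbc, hr⟩)
            have hA1 : ∏ j, (p j).coeff (e j) = 1 := by
              rw [← Finset.mul_prod_erase Finset.univ (fun j => (p j).coeff (e j))
                (Finset.mem_univ j0)]
              have h1 : (p j0).coeff (e j0) = 1 := by
                simp only [hp, if_pos rfl, h0]
                exact Polynomial.coeff_one_zero
              rw [h1, one_mul]
              refine Finset.prod_eq_one fun j hj => ?_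
              have hjne := Finset.ne_of_mem_erase hj
              simp only [hp, if_neg hjne]
              rw [hrem.2 j hjne]
              exact dPoly_coeff_top (P j) (y j).2
            have hA1' : ∏ j, (p' j).coeff (e j) = 1 := by
              rw [← Finset.mul_prod_erase Finset.univ (fun j => (p' j).coeff (e j))
                (Finset.mem_univ j0)]
              have h1 : (p' j0).coeff (e j0) = 1 := by
                simp only [hp', if_pos rfl, h0]
                exact Polynomial.coeff_one_zero
              rw [h1, one_mul]
              refine Finset.prod_eq_one fun j hj => ?_
              have hjne := Finset.ne_of_mem_erase hj
              simp only [hp', if_neg hjne]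
              rw [hrem.2 j hjne]
              exact dPoly_coeff_top (P j) (y' j).2
            simp only [hA]
            rw [hA1, hA1', sub_self, zero_smul]
          · have h1 : (p j0).coeff (e j0) = 0 := by
              simp [hp, Polynomial.coeff_one, h0]
            have h1' : (p' j0).coeff (e j0) = 0 := by
              simp [hp', Polynomial.coeff_one, h0]
            simp only [hA]
            rw [Finset.prod_eq_zero (Finset.mem_univ j0) h1,
              Finset.prod_eq_zero (Finset.mem_univ j0) h1', sub_self, zero_smul]
        have hmem : c0 ∈ MCC P Δ := by
          refine (mem_MCC_iff P).2 ⟨A, ?_⟩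
          rw [hrep]
          exact (Finset.sum_subset hΔ_sub hAvan).symm
        -- value characterization
        have hPynz : ∀ (z : MCCPt P), (∀ j, j ≠ j0 → (if j = j0 then (1 : Polynomial F)
            else dPoly (P j) ((z j : F))) = (if j = j0 then 1 else dPoly (P j) ((z j : F)))) := by
          intro z j _
          rfl
        have hprod_nz : ∀ (z x : MCCPt P), (∀ j, j ≠ j0 → x j = z j) →
            (∏ j, (if j = j0 then (1 : Polynomial F) else
              dPoly (P j) ((z j : F))).eval ((x j : F))) ≠ 0 := by
          intro z x hx
          refine Finset.prod_ne_zero_iff.2 fun j _ => ?_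
          by_cases hj : j = j0
          · rw [hj, if_pos rfl, Polynomial.eval_one]
            exact one_ne_zero
          · rw [if_neg hj, hx j hj]
            exact dPoly_eval_self (P j)
        have hprod_z : ∀ (z x : MCCPt P), (∃ j, j ≠ j0 ∧ x j ≠ z j) →
            (∏ j, (if j = j0 then (1 : Polynomial F) else
              dPoly (P j) ((z j : F))).eval ((x j : F))) = 0 := by
          rintro z x ⟨j, hj, hxz⟩
          refine Finset.prod_eq_zero (Finset.mem_univ j) ?_
          rw [if_neg hj]
          exact dPoly_eval_ne (P j) (x j).2 fun h => hxz (Subtype.ext h)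
        have hchar : ∀ x : MCCPt P, c0 x ≠ 0 ↔
            ((∀ j, j ≠ j0 → x j = y j) ∨ (∀ j, j ≠ j0 → x j = y' j)) := by
          intro x
          constructor
          · intro hx
            by_contra hcon
            push_neg at hcon
            obtain ⟨⟨ja, hja, hjay⟩, ⟨jb, hjb, hjby⟩⟩ := hcon
            apply hx
            rw [hc0]
            simp only [hp, hp']
            rw [hprod_z y x ⟨ja, hja, hjay⟩, hprod_z y' x ⟨jb, hjb, hjby⟩, sub_self]
          · intro hor
            rcases hor with h | h
            · have h2 : (∏ j, (p' j).eval ((x j : F))) = 0 := by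
                simp only [hp']
                refine hprod_z y' x ⟨j1, hj1, ?_⟩
                rw [h j1 hj1]
                exact fun hh => hyy' hh.symm
              rw [hc0]
              simp only [hp, hp'] at h2 ⊢
              rw [h2, sub_zero]
              exact hprod_nz y x h
            · have h2 : (∏ j, (p j).eval ((x j : F))) = 0 := by
                simp only [hp]
                refine hprod_z y x ⟨j1, hj1, ?_⟩
                rw [h j1 hj1]
                exact hyy'
              rw [hc0]
              simp only [hp, hp'] at h2 ⊢
              rw [h2, zero_sub, neg_ne_zero]
              exact hprod_nz y' x h
        have hfibmem : ∀ (z x : MCCPt P), (∀ j, j ≠ j0 → x j = z j) ↔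
            x ∈ Finset.univ.image (fun v : {v // v ∈ P j0} => Function.update z j0 v) := by
          intro z x
          constructor
          · intro h
            refine Finset.mem_image.2 ⟨x j0, Finset.mem_univ _, ?_⟩
            funext j
            by_cases hj : j = j0
            · rw [hj, Function.update_self]
            · rw [Function.update_of_ne hj, h j hj]
          · intro h
            obtain ⟨v, _, rfl⟩ := Finset.mem_image.1 h
            exact fun j hj => Function.update_of_ne hj _ _
        have hfilter : (Finset.univ.filter fun x : MCCPt P => c0 x ≠ 0) =
            (Finset.univ.image fun v : {v // v ∈ P j0} => Function.update y j0 v) ∪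
            (Finset.univ.image fun v : {v // v ∈ P j0} => Function.update y' j0 v) := by
          ext x
          rw [Finset.mem_union, Finset.mem_filter]
          constructor
          · intro hx
            rcases (hchar x).1 hx.2 with h | h
            · exact Or.inl ((hfibmem y x).1 h)
            · exact Or.inr ((hfibmem y' x).1 h)
          · intro hx
            refine ⟨Finset.mem_univ _, (hchar x).2 ?_⟩
            rcases hx with h | h
            · exact Or.inl ((hfibmem y x).2 h)
            · exact Or.inr ((hfibmem y' x).2 h)
        have hdisj : Disjoint
            (Finset.univ.image fun v : {v // v ∈ P j0} => Function.update y j0 v)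
            (Finset.univ.image fun v : {v // v ∈ P j0} => Function.update y' j0 v) := by
          rw [Finset.disjoint_left]
          intro x hx hx'
          have h1 := (hfibmem y x).2 hx j1 hj1
          have h2 := (hfibmem y' x).2 hx' j1 hj1
          exact hyy' (h2 ▸ h1 ▸ rfl)
        have hwit : c0 y ≠ 0 := (hchar y).2 (Or.inl fun j _ => rfl)
        refine ⟨c0, hmem, Function.ne_iff.2 ⟨y, hwit⟩, ?_⟩
        unfold hammingNorm
        rw [if_neg hs1, hfilter, Finset.card_union_of_disjoint hdisj,
          Finset.card_image_of_injective _ (update_injective P j0 y),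
          Finset.card_image_of_injective _ (update_injective P j0 y')]
        have hucard : (Finset.univ : Finset {v // v ∈ P j0}).card = n0 := by
          simp [Fintype.card_coe, hn0def]
        omega
  refine ⟨hLRC, ?_, hMD, ?_⟩
  · rw [finrank_MCC P hΔ_sub hP1, hΔcard]
  · -- the Singleton-type equality
    have hcardPt : Fintype.card (MCCPt P) = n0 * ∏ j ∈ Finset.univ.erase j0, (P j).card := by
      rw [show Fintype.card (MCCPt P) = ∏ j, (P j).card from by
        rw [Fintype.card_pi]
        exact Finset.prod_congr rfl fun j _ => Fintype.card_coe _]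
      rw [← Finset.mul_prod_erase Finset.univ _ (Finset.mem_univ j0)]
    rw [hcardPt]
    set N : ℕ := ∏ j ∈ Finset.univ.erase j0, (P j).card with hN
    by_cases hs1 : 1 ≤ s
    · rw [if_pos hs1]
      have hrN : (i0 + 1) * 2 ≤ (i0 + 1) * N := Nat.mul_le_mul_left _ hNbig
      have hkr : (i0 + 1) * N - (i0 - s + 1) + (i0 + 1) - 1 = (s - 1) + (i0 + 1) * N := by
        omega
      rw [hkr, Nat.add_mul_div_left _ _ (Nat.succ_pos i0), Nat.div_eq_of_lt (by omega), zero_add]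
      have h1 : i0 - s + 1 ≤ (i0 + 1) * N := by omega
      have h2 : 1 ≤ N := by omega
      have h3 : s ≤ n0 := by omega
      have h4 : i0 + 1 ≤ n0 := by omega
      have h5 : i0 - s = i0 - s := rfl
      have h6 : 1 ≤ n0 - i0 := by omega
      have h7 : i0 ≤ n0 := by omega
      zify [h1, h2, h3, h4, hs1, hs_le, h6, h7]
      ring
    · rw [if_neg hs1]
      have hi0 : i0 = 0 := by
        rcases hcase with ⟨h, _, _⟩ | ⟨h1, h2⟩
        · exact absurd (le_trans (le_max_left _ _) h) hs1
        · exact h1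
      have hs0 : s = 0 := by omega
      rw [hi0, hs0]
      simp only [zero_add, one_mul, Nat.zero_sub, Nat.sub_zero, Nat.div_one]
      have h2 : 2 ≤ N := hNbig
      have hkr : N - (0 - 0 + 1) + (0 + 1) - 1 = N - 1 := by omega
      rw [hkr]
      have h3 : 1 ≤ N - 1 := by omega
      zify [h2, h3, Nat.one_le_iff_ne_zero.2, show (1:ℕ) ≤ N by omega,
        show (1:ℕ) ≤ n0 by omega, Nat.sub_le N 1]
      ring
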